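/- arXiv:2204.11131 — 2 statements merged into one kernel-verified Lean document; each statement's English description precedes it below -/
import Mathlib

section
/- The Shapley value is efficient: for any utility function u on subsets of a finite player set D of size n, the sum over all players t in D of their Shapley values φ(t) equals u(D) - u(∅). -/
open Finset

/-- The Shapley value of player `t` with respect to utility `u` on `n` players. -/
noncomputable def shapley {n : ℕ} (u : Finset (Fin n) → ℝ) (t : Fin n) : ℝ :=
  (n : ℝ)⁻¹ * ∑ S ∈ (Finset.univ.erase t).powerset,
    (((n - 1).choose S.card : ℝ))⁻¹ * (u (insert t S) - u S)

lemma shapley_aux_arith {n k : ℕ} (hk0 : 0 < k) (hkn : k < n) :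
    (k : ℝ) * (((n - 1).choose (k - 1) : ℝ))⁻¹
      = ((n : ℝ) - k) * (((n - 1).choose k : ℝ))⁻¹ := by
  obtain ⟨m, rfl⟩ : ∃ m, n = m + 1 := ⟨n - 1, by omega⟩
  obtain ⟨j, rfl⟩ : ∃ j, k = j + 1 := ⟨k - 1, by omega⟩
  have hjm : j + 1 ≤ m := by omega
  have h1 : (0:ℝ) < m.choose j := by exact_mod_cast Nat.choose_pos (by omega)
  have h2 : (0:ℝ) < m.choose (j+1) := by exact_mod_cast Nat.choose_pos hjm
  have key : m.choose (j+1) * (j+1) = m.choose j * (m - j) := Nat.choose_succ_right_eq m j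
  have keyR : (m.choose (j+1) : ℝ) * (j+1) = (m.choose j : ℝ) * ((m:ℝ) - j) := by
    have := congrArg (Nat.cast : ℕ → ℝ) key
    push_cast [Nat.cast_sub (by omega : j ≤ m)] at this
    linarith
  simp only [Nat.add_sub_cancel]
  field_simp
  push_cast
  nlinarith [keyR]

theorem shapley_efficiency (n : ℕ) (u : Finset (Fin n) → ℝ) :
    ∑ t : Fin n, shapley u t = u Finset.univ - u ∅ := by
  rcases Nat.eq_zero_or_pos n with rfl | hn
  · simp [shapley, Finset.univ_eq_empty]
  classical
  set c : ℕ → ℝ := fun k => (((n - 1).choose k : ℝ))⁻¹ with hc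
  have step1 : ∀ t : Fin n, shapley u t
      = (n:ℝ)⁻¹ * ∑ T ∈ (univ : Finset (Fin n)).powerset,
          ((if t ∈ T then c (T.card - 1) * u T else 0)
            - (if t ∉ T then c T.card * u T else 0)) := by
    intro t
    unfold shapley
    congr 1
    rw [Finset.sum_sub_distrib]
    have hsplit : ∀ S : Finset (Fin n), c S.card * (u (insert t S) - u S)
        = c S.card * u (insert t S) - c S.card * u S := fun S => by ring
    simp only [mul_sub]
    rw [Finset.sum_sub_distrib]
    congr 1
    · -- positive part: reindex by insert t
      rw [← Finset.sum_filter]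
      refine Finset.sum_nbij' (fun S => insert t S) (fun T => T.erase t) ?_ ?_ ?_ ?_ ?_
      · intro S hS
        simp only [Finset.mem_powerset, Finset.mem_filter] at *
        exact ⟨Finset.subset_univ _, Finset.mem_insert_self t S⟩
      · intro T hT
        simp only [Finset.mem_powerset, Finset.mem_filter] at *
        exact Finset.erase_subset_erase t (Finset.subset_univ T)
      · intro S hS
        rw [Finset.mem_powerset, Finset.subset_erase] at hS
        exact Finset.erase_insert hS.2
      · intro T hT
        rw [Finset.mem_filter] at hT
        exact Finset.insert_erase hT.2
      · intro S hS
        rw [Finset.mem_powerset, Finset.subset_erase] at hS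
        have ht : t ∉ S := hS.2
        show c S.card * u (insert t S) = c ((insert t S).card - 1) * u (insert t S)
        rw [Finset.card_insert_of_notMem ht, Nat.add_sub_cancel]
    · rw [← Finset.sum_filter]
      apply Finset.sum_congr _ (fun _ _ => rfl)
      ext S
      simp only [Finset.mem_powerset, Finset.mem_filter, Finset.subset_erase]
  rw [Finset.sum_congr rfl (fun t _ => step1 t), ← Finset.mul_sum]
  rw [Finset.sum_comm]
  have inner : ∀ T ∈ (univ : Finset (Fin n)).powerset,
      (∑ t : Fin n, ((if t ∈ T then c (T.card - 1) * u T else 0)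
          - (if t ∉ T then c T.card * u T else 0)))
      = (if T = univ then (n:ℝ) * u univ else 0)
        + (if T = (∅ : Finset (Fin n)) then -((n:ℝ) * u ∅) else 0) := by
    intro T hT
    rw [Finset.sum_sub_distrib]
    rw [Finset.sum_ite_mem, Finset.univ_inter, Finset.sum_const]
    have : (∑ t : Fin n, if t ∉ T then c T.card * u T else 0)
        = (Finset.univ \ T).card • (c T.card * u T) := by
      rw [← Finset.sum_filter, ← Finset.sum_const]
      apply Finset.sum_congr _ (fun _ _ => rfl)
      ext x; simp [Finset.mem_sdiff]
    rw [this]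
    have hcard : (Finset.univ \ T).card = n - T.card := by
      rw [Finset.card_sdiff_of_subset (Finset.subset_univ T), Finset.card_univ, Fintype.card_fin]
    rw [hcard]
    by_cases hTu : T = univ
    · subst hTu
      simp only [if_pos rfl, Finset.card_univ, Fintype.card_fin, Nat.sub_self]
      have : (univ : Finset (Fin n)) ≠ ∅ := by
        have : Nonempty (Fin n) := Fin.pos_iff_nonempty.mp hn
        exact Finset.univ_nonempty.ne_empty
      rw [if_neg this]
      have : c (n - 1) = 1 := by
        simp [hc, Nat.choose_self]
      rw [this]
      push_cast
      ring
    · by_cases hTe : T = ∅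
      · subst hTe
        simp only [if_neg hTu, if_pos rfl, Finset.card_empty, Nat.sub_zero]
        have : c 0 = 1 := by simp [hc]
        rw [this]
        push_cast
        ring
      · rw [if_neg hTu, if_neg hTe]
        have hk0 : 0 < T.card := Finset.card_pos.mpr (Finset.nonempty_of_ne_empty hTe)
        have hkn : T.card < n := by
          have := Finset.card_lt_card (Finset.ssubset_univ_iff.mpr hTu)
          simpa using this
        have := shapley_aux_arith hk0 hkn
        rw [nsmul_eq_mul, nsmul_eq_mul]
        rw [Nat.cast_sub hkn.le]
        simp only [hc] at this ⊢
        linear_combination (u T) * this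
  rw [Finset.sum_congr rfl inner]
  rw [Finset.sum_add_distrib]
  rw [Finset.sum_ite_eq' _ (univ : Finset (Fin n)), Finset.sum_ite_eq' _ (∅ : Finset (Fin n))]
  have h1 : (univ : Finset (Fin n)) ∈ (univ : Finset (Fin n)).powerset := Finset.mem_powerset_self _
  have h2 : (∅ : Finset (Fin n)) ∈ (univ : Finset (Fin n)).powerset := by simp
  rw [if_pos h1, if_pos h2]
  have hn' : (n:ℝ) ≠ 0 := by positivity
  field_simp
  ring
end

section
/- Variable restriction is sound: restricting an ADD by fixing variable x_i to value b yields a diagram over the remaining variables whose evaluation on any assignment v equals the evaluation of the original diagram on v extended with x_i := b. -/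
/-- An additive decision diagram over `k` Boolean variables, whose sink carries
a constant value (so that restricted diagrams can absorb edge increments). -/
inductive ADD : ℕ → Type
  | sink (c : ℤ) : ADD 0
  | node {k : ℕ} (wL wH : ℤ) (lo hi : ADD k) : ADD (k + 1)

/-- Evaluation of an ADD on a Boolean assignment. -/
def ADD.eval : {k : ℕ} → ADD k → (Fin k → Bool) → ℤ
  | _, .sink c, _ => c
  | _, .node wL wH lo hi, v =>
      if v 0 then wH + hi.eval (fun i => v i.succ) else wL + lo.eval (fun i => v i.succ)

/-- Add a constant increment to every path of an ADD. -/
def ADD.addConst : {k : ℕ} → ℤ → ADD k → ADD k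
  | _, c, .sink c' => .sink (c + c')
  | _, c, .node wL wH lo hi => .node (c + wL) (c + wH) lo hi

/-- Restriction `N[xᵢ ← b]`: remove the layer for variable `i`, rewiring the
diagram through the low child (adding `wL`) if `b = false`, or through the high
child (adding `wH`) if `b = true`. -/
def ADD.restrict : {k : ℕ} → ADD (k + 1) → Fin (k + 1) → Bool → ADD k
  | 0, .node wL wH lo hi, _, b =>
      ADD.addConst (if b then wH else wL) (if b then hi else lo)
  | _ + 1, .node wL wH lo hi, i, b =>
      if h : i = 0 then
        ADD.addConst (if b then wH else wL) (if b then hi else lo)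
      else
        .node wL wH (lo.restrict (i.pred h) b) (hi.restrict (i.pred h) b)

lemma eval_addConst : ∀ {k : ℕ} (c : ℤ) (d : ADD k) (v : Fin k → Bool),
    (ADD.addConst c d).eval v = c + d.eval v
  | _, c, .sink c', v => rfl
  | _, c, .node wL wH lo hi, v => by
      simp only [ADD.addConst, ADD.eval]
      split <;> ring

lemma insertNth_succ_zero {k : ℕ} {β : Sort*} (j : Fin (k + 1)) (b : β) (v : Fin (k + 1) → β) :
    Fin.insertNth (α := fun _ => β) (Fin.succ j) b v 0 = v 0 := by
  have h0 : (Fin.succ j).succAbove 0 = 0 := by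
    rw [Fin.succAbove_of_castSucc_lt]
    · rfl
    · simp [Fin.lt_iff_val_lt_val]
  conv_lhs => rw [← h0, Fin.insertNth_apply_succAbove]

lemma insertNth_succ_succ {k : ℕ} {β : Sort*} (j : Fin (k + 1)) (b : β) (v : Fin (k + 1) → β)
    (m : Fin (k + 1)) :
    Fin.insertNth (α := fun _ => β) (Fin.succ j) b v m.succ = Fin.insertNth (α := fun _ => β) j b (fun i => v i.succ) m := by
  rcases eq_or_ne m j with rfl | hm
  · rw [Fin.insertNth_apply_same, Fin.insertNth_apply_same]
  · obtain ⟨l, rfl⟩ := Fin.exists_succAbove_eq hm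
    have h1 : (Fin.succ j).succAbove l.succ = (j.succAbove l).succ :=
      Fin.succ_succAbove_succ j l
    rw [← h1, Fin.insertNth_apply_succAbove, Fin.insertNth_apply_succAbove]

theorem add_restrict_sound {k : ℕ} (d : ADD (k + 1)) (i : Fin (k + 1)) (b : Bool)
    (v : Fin k → Bool) :
    (d.restrict i b).eval v = d.eval (i.insertNth b v) := by
  induction k with
  | zero =>
    cases d with
    | node wL wH lo hi =>
      have hi0 : i = 0 := Fin.fin_one_eq_zero i
      subst hi0
      simp only [ADD.restrict, eval_addConst, Fin.insertNth_zero', ADD.eval, Fin.cons_zero]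
      cases b <;> simp [ADD.eval]
  | succ k ih =>
    cases d with
    | node wL wH lo hi =>
      by_cases h : i = 0
      · subst h
        simp only [ADD.restrict, dif_pos, eval_addConst, Fin.insertNth_zero', ADD.eval,
          Fin.cons_zero, Fin.cons_succ]
        cases b <;> simp [ADD.eval]
      · obtain ⟨j, rfl⟩ : ∃ j : Fin (k+1), i = j.succ := ⟨i.pred h, (Fin.succ_pred i h).symm⟩
        simp only [ADD.restrict, dif_neg h, ADD.eval, Fin.pred_succ,
          insertNth_succ_zero, ih]
        simp only [insertNth_succ_succ]
end
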